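/- (The curve-normalized function is a polymatroid function.) Let V be a finite ground set, let f : 2^V → ℝ be a polymatroid function with f({j}) > 0 for all j ∈ V, and let κ_f be its total curvature, assumed to satisfy 0 < κ_f ≤ 1. Define the κ_f-curve-normalized version of f by f^κ(X) = ( f(X) − (1 − κ_f)·Σ_{j∈X} f({j}) ) / κ_f. Then f^κ is a polymatroid function: it is normalized, monotone non-decreasing, and submodular (in particular f^κ(X) ≥ 0 for all X ⊆ V). -/

import Mathlib

/-- the `κ_f`-curve-normalized version `f^κ` of a polymatroid
function `f` with total curvature `κ_f ∈ (0,1]` is itself a polymatroid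
function: normalized, monotone non-decreasing and submodular (in particular
nonnegative). -/
theorem curve_normalized_is_polymatroid
    {V : Type*} [Fintype V] [DecidableEq V] [Nonempty V]
    (f : Finset V → ℝ)
    (hfsub : ∀ S T : Finset V, f (S ∪ T) + f (S ∩ T) ≤ f S + f T)
    (hfmono : ∀ S T : Finset V, S ⊆ T → f S ≤ f T)
    (hfnorm : f ∅ = 0)
    (hfpos : ∀ j : V, 0 < f {j})
    (κ : ℝ)
    (hκ : κ = 1 - Finset.univ.inf' Finset.univ_nonempty
      (fun j : V => (f Finset.univ - f (Finset.univ \ {j})) / f {j}))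
    (hκ₀ : 0 < κ) (hκ₁ : κ ≤ 1)
    (fκ : Finset V → ℝ)
    (hfκ : ∀ X : Finset V, fκ X = (f X - (1 - κ) * ∑ j ∈ X, f {j}) / κ) :
    fκ ∅ = 0 ∧
    (∀ S T : Finset V, S ⊆ T → fκ S ≤ fκ T) ∧
    (∀ S T : Finset V, fκ (S ∪ T) + fκ (S ∩ T) ≤ fκ S + fκ T) ∧
    (∀ X : Finset V, 0 ≤ fκ X) := by
  -- key marginal bound
  have key : ∀ (A : Finset V) (j : V), j ∉ A →
      (1 - κ) * f {j} ≤ f (insert j A) - f A := by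
    intro A j hj
    have h1 : 1 - κ ≤ (f Finset.univ - f (Finset.univ \ {j})) / f {j} := by
      rw [hκ]; simp only [sub_sub_cancel]
      exact Finset.inf'_le _ (Finset.mem_univ j)
    have h2 : (1 - κ) * f {j} ≤ f Finset.univ - f (Finset.univ \ {j}) := by
      have := mul_le_mul_of_nonneg_right h1 (hfpos j).le
      rwa [div_mul_cancel₀ _ (hfpos j).ne'] at this
    have h3 : f Finset.univ - f (Finset.univ \ {j}) ≤ f (insert j A) - f A := by
      have hu : insert j A ∪ (Finset.univ \ {j}) = Finset.univ := by
        ext x; by_cases hx : x = j <;> simp [hx]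
      have hi : insert j A ∩ (Finset.univ \ {j}) = A := by
        ext x
        simp only [Finset.mem_inter, Finset.mem_insert, Finset.mem_sdiff,
          Finset.mem_univ, Finset.mem_singleton, true_and]
        constructor
        · rintro ⟨h | h, h2⟩
          · exact absurd h h2
          · exact h
        · intro h; exact ⟨Or.inr h, fun he => hj (he ▸ h)⟩
      have := hfsub (insert j A) (Finset.univ \ {j})
      rw [hu, hi] at this
      linarith
    linarith
  -- monotone for f with correction
  have mono' : ∀ (S D : Finset V), Disjoint S D →
      f S + (1 - κ) * ∑ j ∈ D, f {j} ≤ f (S ∪ D) := by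
    intro S D
    induction D using Finset.induction_on with
    | empty => simp
    | @insert a D ha ih =>
      intro hdisj
      have hdisj' : Disjoint S D := hdisj.mono_right (Finset.subset_insert a D)
      have haS : a ∉ S ∪ D := by
        simp only [Finset.mem_union, not_or]
        exact ⟨fun h => (Finset.disjoint_left.mp hdisj h) (Finset.mem_insert_self a D),
          ha⟩
      have hk := key (S ∪ D) a haS
      have hsum : ∑ j ∈ insert a D, f {j} = f {a} + ∑ j ∈ D, f {j} :=
        Finset.sum_insert ha
      have hu : S ∪ insert a D = insert a (S ∪ D) := by
        ext x; simp [or_assoc, or_left_comm]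
      rw [hu, hsum]
      have := ih hdisj'
      nlinarith
  refine ⟨?_, ?_, ?_, ?_⟩
  · rw [hfκ]; simp [hfnorm]
  · intro S T hST
    rw [hfκ, hfκ]
    have hsplit : T = S ∪ (T \ S) := by
      rw [Finset.union_sdiff_self_eq_union, Finset.union_eq_right.mpr hST]
    have hd : Disjoint S (T \ S) := Finset.disjoint_sdiff
    have hm := mono' S (T \ S) hd
    rw [← hsplit] at hm
    have hsum : ∑ j ∈ T, f {j} = ∑ j ∈ S, f {j} + ∑ j ∈ T \ S, f {j} := by
      conv_lhs => rw [hsplit, Finset.sum_union hd]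
    have hnum : f S - (1 - κ) * ∑ j ∈ S, f {j} ≤ f T - (1 - κ) * ∑ j ∈ T, f {j} := by
      rw [hsum]; nlinarith
    exact div_le_div_of_nonneg_right hnum hκ₀.le |>.trans_eq rfl
  · intro S T
    rw [hfκ, hfκ, hfκ, hfκ]
    rw [← add_div, ← add_div]
    apply div_le_div_of_nonneg_right _ hκ₀.le
    have hsum := Finset.sum_union_inter (s₁ := S) (s₂ := T) (f := fun j => f {j})
    have := hfsub S T
    nlinarith
  · intro X
    rw [hfκ]
    apply div_nonneg _ hκ₀.le
    have hm := mono' ∅ X (Finset.disjoint_left.mpr (by simp))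
    rw [Finset.empty_union, hfnorm] at hm
    linarith
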